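/- For all r, s ∈ ℤ and all indices 1 ≤ i, j, k, l ≤ n, the trace cocycle evaluated on the current-algebra generators satisfies c_Lie(E_{ij}^r, E_{kl}^s) = δ_{r,−s}·δ_{il}·δ_{jk}·s, where E_{ij}^r is the endomorphism of V whose m-th component of E_{ij}^r(v) is δ_{mi}·z^r·v_j. -/

import Mathlib

noncomputable section

abbrev K : Type := LaurentSeries ℂ

abbrev V (n : ℕ) : Type := Fin n → K

/-- The formal derivative of a Laurent series. -/
def fd (f : K) : K :=
  ⟨fun k => ((k + 1 : ℤ) : ℂ) * f.coeff (k + 1), by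
    apply Set.IsPWO.mono (f.isPWO_support.image_of_monotone
      (f := fun x => x - 1) (fun _ _ h => sub_le_sub_right h 1))
    intro k hk
    have : f.coeff (k + 1) ≠ 0 := by
      intro h
      simp [Function.mem_support, h] at hk
    exact ⟨k + 1, this, by ring⟩⟩

/-- Truncation of a Laurent series to its coefficients in negative degrees: the
projection onto `K₋` along `K₊`. -/
def tneg (f : K) : K :=
  ⟨fun k => if k < 0 then f.coeff k else 0, by
    refine f.isPWO_support.mono (fun k hk => ?_)
    simp only [Function.mem_support] at hk ⊢
    by_cases h : k < 0
    · simpa [h] using hk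
    · simp [h] at hk⟩

/-- Truncation of a Laurent series to its coefficients in non-negative degrees: the
projection onto `K₊` along `K₋`. -/
def tpos (f : K) : K :=
  ⟨fun k => if 0 ≤ k then f.coeff k else 0, by
    refine f.isPWO_support.mono (fun k hk => ?_)
    simp only [Function.mem_support] at hk ⊢
    by_cases h : (0:ℤ) ≤ k
    · simpa [h] using hk
    · simp [h] at hk⟩

/-- Componentwise projection of `V` onto `V₋` along `V₊`. -/
def projM {n : ℕ} (v : V n) : V n := fun i => tneg (v i)

/-- Componentwise projection of `V` onto `V₊` along `V₋`. -/
def projP {n : ℕ} (v : V n) : V n := fun i => tpos (v i)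

/-- The basis vector `z^m · e_i` of `V`. -/
def bas (n : ℕ) (m : ℤ) (i : Fin n) : V n :=
  fun j => if j = i then HahnSeries.single m 1 else 0

/-- `T₁^{+−} ∘ T₂^{−+} − T₂^{+−} ∘ T₁^{−+}` as a map `V₋ → V₋` (evaluated through the
projections onto `V₋` and `V₊`). -/
def commPM {n : ℕ} (T₁ T₂ : V n → V n) (v : V n) : V n :=
  projM (T₁ (projP (T₂ (projM v)))) - projM (T₂ (projP (T₁ (projM v))))

/-- The trace cocycle `c_Lie(T₁, T₂) = Tr(T₁^{+−} T₂^{−+} − T₂^{+−} T₁^{−+})`, computed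
as the (finitely supported) sum of the diagonal coefficients in the basis
`{z^m e_i : m < 0, i}` of `V₋`. -/
def cLie (n : ℕ) (T₁ T₂ : V n → V n) : ℂ :=
  ∑ᶠ (m : ℤ) (_ : m < 0) (i : Fin n), ((commPM T₁ T₂ (bas n m i)) i).coeff m

/-- The current-algebra generator `E_{ij}^r`, whose `m`-th component of `E_{ij}^r v` is
`δ_{mi} · z^r · v_j`. -/
def Eb (n : ℕ) (i j : Fin n) (r : ℤ) : V n → V n :=
  fun v m => if m = i then HahnSeries.single r 1 * v j else 0

lemma tneg_coeff (f : K) (k : ℤ) : (tneg f).coeff k = if k < 0 then f.coeff k else 0 := rfl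
lemma tpos_coeff (f : K) (k : ℤ) : (tpos f).coeff k = if 0 ≤ k then f.coeff k else 0 := rfl

lemma single_one_mul_coeff (a : ℤ) (f : K) (m : ℤ) :
    (HahnSeries.single a (1:ℂ) * f).coeff m = f.coeff (m - a) := by
  have h := HahnSeries.coeff_single_mul_add (r := (1:ℂ)) (x := f) (a := m - a) (b := a)
  rw [sub_add_cancel] at h
  simp [h]

lemma intIf1 (r s m : ℤ) [Decidable (m < 0)] [Decidable (0 ≤ m - r)]
    [Decidable (m - r - s < 0)] [Decidable (m - r - s = m)] :
    (if m < 0 then if 0 ≤ m - r then if m - r - s < 0 then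
        if m - r - s = m then (1:ℂ) else 0 else 0 else 0 else 0)
      = if r = -s ∧ m < 0 ∧ -s ≤ m then 1 else 0 := by
  split_ifs <;> first | rfl | (exfalso; omega)

lemma key (n : ℕ) (r s : ℤ) (i j k l : Fin n) (m : ℤ) (p : Fin n) :
    ((commPM (Eb n i j r) (Eb n k l s) (bas n m p)) p).coeff m =
      (if p = i ∧ j = k ∧ l = p ∧ r = -s ∧ m < 0 ∧ -s ≤ m then (1:ℂ) else 0)
      - (if p = k ∧ l = i ∧ j = p ∧ s = -r ∧ m < 0 ∧ -r ≤ m then (1:ℂ) else 0) := by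
  simp only [commPM, Pi.sub_apply, HahnSeries.coeff_sub, projM, projP, Eb, bas, tneg_coeff,
    tpos_coeff, apply_ite (fun f : K => f.coeff m), apply_ite tpos, apply_ite tneg,
    apply_ite (fun f : K => HahnSeries.single r (1:ℂ) * f),
    apply_ite (fun f : K => HahnSeries.single s (1:ℂ) * f),
    single_one_mul_coeff, mul_zero, HahnSeries.coeff_zero, HahnSeries.coeff_single, ite_self]
  simp only [intIf1]
  simp only [ite_and]

/-- The value of the trace cocycle on the current-algebra generators:
`c_Lie(E_{ij}^r, E_{kl}^s) = δ_{r,−s} · δ_{il} · δ_{jk} · s`. -/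
theorem cLie_current (n : ℕ) (hn : 1 ≤ n) (r s : ℤ) (i j k l : Fin n) :
    cLie n (Eb n i j r) (Eb n k l s) =
      if r = -s ∧ i = l ∧ j = k then (s : ℂ) else 0 := by
  classical
  unfold cLie
  simp only [key]
  by_cases H : r = -s ∧ i = l ∧ j = k
  · obtain ⟨hr, hil, hjk⟩ := H
    subst hr; subst hil; subst hjk
    rw [if_pos ⟨rfl, rfl, rfl⟩]
    simp only [eq_self_iff_true, true_and, and_true, neg_neg]
    have hinner : ∀ m : ℤ, (∑ᶠ p : Fin n,
        ((if p = i ∧ i = p ∧ m < 0 ∧ -s ≤ m then (1:ℂ) else 0) -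
          if p = j ∧ j = p ∧ m < 0 ∧ s ≤ m then 1 else 0))
        = (if m < 0 ∧ -s ≤ m then (1:ℂ) else 0) - (if m < 0 ∧ s ≤ m then 1 else 0) := by
      intro m
      have e1 : ∀ p : Fin n,
          (if p = i ∧ i = p ∧ m < 0 ∧ -s ≤ m then (1:ℂ) else 0)
          = if p = i then (if m < 0 ∧ -s ≤ m then (1:ℂ) else 0) else 0 := by
        intro p; by_cases hp : p = i
        · subst hp; simp
        · simp [hp]
      have e2 : ∀ p : Fin n,
          (if p = j ∧ j = p ∧ m < 0 ∧ s ≤ m then (1:ℂ) else 0)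
          = if p = j then (if m < 0 ∧ s ≤ m then (1:ℂ) else 0) else 0 := by
        intro p; by_cases hp : p = j
        · subst hp; simp
        · simp [hp]
      rw [finsum_eq_sum_of_fintype]
      simp only [e1, e2]
      rw [Finset.sum_sub_distrib, Finset.sum_ite_eq', Finset.sum_ite_eq']
      simp
    simp only [hinner, finsum_eq_if]
    have hcollapse : ∀ m : ℤ, (if m < 0 then
          ((if m < 0 ∧ -s ≤ m then (1:ℂ) else 0) - (if m < 0 ∧ s ≤ m then 1 else 0)) else 0)
        = ((if m < 0 ∧ -s ≤ m then (1:ℂ) else 0) - (if m < 0 ∧ s ≤ m then 1 else 0)) := by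
      intro m; by_cases hm : m < 0 <;> simp [hm]
    simp only [hcollapse]
    rw [finsum_eq_finset_sum_of_support_subset _ (s := Finset.Ico (-|s|) (0:ℤ)) ?_]
    swap
    · intro m hm
      simp only [Function.mem_support] at hm
      simp only [Finset.coe_Ico, Set.mem_Ico]
      by_contra hc
      apply hm
      have h1 := le_abs_self s
      have h2 := neg_abs_le s
      push_neg at hc
      rw [if_neg (by rintro ⟨ha, hb⟩; omega), if_neg (by rintro ⟨ha, hb⟩; omega), sub_zero]
    rw [Finset.sum_sub_distrib]
    have r1 : ∑ m ∈ Finset.Ico (-|s|) (0:ℤ), (if m < 0 ∧ -s ≤ m then (1:ℂ) else 0)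
        = ∑ m ∈ Finset.Ico (-|s|) (0:ℤ), (if -s ≤ m then (1:ℂ) else 0) :=
      Finset.sum_congr rfl (fun m hm => by
        simp only [Finset.mem_Ico] at hm; simp [hm.2])
    have r2 : ∑ m ∈ Finset.Ico (-|s|) (0:ℤ), (if m < 0 ∧ s ≤ m then (1:ℂ) else 0)
        = ∑ m ∈ Finset.Ico (-|s|) (0:ℤ), (if s ≤ m then (1:ℂ) else 0) :=
      Finset.sum_congr rfl (fun m hm => by
        simp only [Finset.mem_Ico] at hm; simp [hm.2])
    rw [r1, r2, Finset.sum_boole, Finset.sum_boole, Finset.Ico_filter_le, Finset.Ico_filter_le]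
    rw [show (-|s|) ⊔ (-s) = -s from sup_eq_right.mpr (neg_le_neg (le_abs_self s)),
      show (-|s|) ⊔ s = s from sup_eq_right.mpr (neg_abs_le s)]
    rw [Int.card_Ico, Int.card_Ico]
    have hfin : (((0 - -s).toNat : ℤ) : ℂ) - (((0 - s).toNat : ℤ) : ℂ) = ((s : ℤ) : ℂ) := by
      have h : ((0 - -s).toNat : ℤ) - ((0 - s).toNat : ℤ) = s := by omega
      exact_mod_cast congrArg (fun t : ℤ => (t : ℂ)) h
    exact_mod_cast hfin
  · rw [if_neg H]
    have hz : ∀ (m : ℤ) (p : Fin n),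
        (if p = i ∧ j = k ∧ l = p ∧ r = -s ∧ m < 0 ∧ -s ≤ m then (1:ℂ) else 0)
        - (if p = k ∧ l = i ∧ j = p ∧ s = -r ∧ m < 0 ∧ -r ≤ m then (1:ℂ) else 0) = 0 := by
      intro m p
      rw [if_neg, if_neg, sub_zero]
      · rintro ⟨h1, h2, h3, h4, -⟩
        exact H ⟨by omega, h2.symm, h3.trans h1⟩
      · rintro ⟨h1, h2, h3, h4, -⟩
        exact H ⟨h4, (h3.trans h1).symm, h2⟩
    simp only [hz]
    simp


end
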